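/- Let G = (V, E) be a finite simple undirected graph with non-negative edge weights w : E → ℕ, let k be an integer, and let M be a minimum-weight perfect matching of G with w(M) ≤ k and w(M) ≢ k (mod 2). Define w' : E → ℤ by w'(e) = −w(e) − k − 1 for e ∈ M and w'(e) = w(e) + k + 1 for e ∉ M. Then G contains a perfect matching M* with w(M*) ≤ k and w(M*) ≡ k (mod 2) if and only if G contains a cycle C with w'(C) odd and w'(C) ≤ k − w(M). -/

import Mathlib

set_option linter.unusedSectionVars false

variable {V : Type} [Fintype V] [DecidableEq V]

open SimpleGraph

/-- A perfect matching of a graph `G`, viewed as a finite set of edges: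
every edge belongs to `G` and every vertex lies in exactly one edge of `M`. -/
def IsPM (G : SimpleGraph V) (M : Finset (Sym2 V)) : Prop :=
  (∀ e ∈ M, e ∈ G.edgeSet) ∧ ∀ v : V, ∃! e, e ∈ M ∧ v ∈ e

/-- The total weight of a set of edges. -/
def wt (w : Sym2 V → ℤ) (X : Finset (Sym2 V)) : ℤ := ∑ e ∈ X, w e

/-- The total weight of (the edge set of) a closed walk. -/
def cycWt {G : SimpleGraph V} (w : Sym2 V → ℤ) {v : V} (c : G.Walk v v) : ℤ :=
  (c.edges.map w).sum

/-- A cycle `c` is `M`-alternating: its edges alternate (cyclically) between edges in `M`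
and edges not in `M`; equivalently, every vertex of the cycle lies in exactly one edge of
the cycle that belongs to `M`. -/
def IsAltCycle (G : SimpleGraph V) (M : Finset (Sym2 V)) {v : V} (c : G.Walk v v) : Prop :=
  c.IsCycle ∧ ∀ u ∈ c.support, ∃! e, e ∈ c.edges ∧ u ∈ e ∧ e ∈ M



lemma mem_support_of_edge {G : SimpleGraph V} {a b : V} {p : G.Walk a b} {e : Sym2 V}
    (he : e ∈ p.edges) {u : V} (hu : u ∈ e) : u ∈ p.support := by
  induction e with
  | _ x y =>
    rcases Sym2.mem_iff.mp hu with rfl | rfl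
    · exact p.fst_mem_support_of_mem_edges he
    · exact p.snd_mem_support_of_mem_edges he

/-- In a path, any two edges containing the start vertex are equal. -/
lemma path_start_edge_unique {G : SimpleGraph V} {a b : V} {p : G.Walk a b} (hp : p.IsPath) :
    ∀ e₁ ∈ p.edges, ∀ e₂ ∈ p.edges, a ∈ e₁ → a ∈ e₂ → e₁ = e₂ := by
  cases p with
  | nil => simp
  | @cons _ c _ h q =>
    rw [SimpleGraph.Walk.cons_isPath_iff] at hp
    have key : ∀ e ∈ (SimpleGraph.Walk.cons h q).edges, a ∈ e → e = s(a, c) := by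
      intro e he hae
      rw [SimpleGraph.Walk.edges_cons, List.mem_cons] at he
      rcases he with rfl | he
      · rfl
      · exact absurd (mem_support_of_edge he hae) hp.2
    intro e₁ h₁ e₂ h₂ ha₁ ha₂
    rw [key e₁ h₁ ha₁, key e₂ h₂ ha₂]

lemma count_start_path {G : SimpleGraph V} {a b : V} {p : G.Walk a b} (hp : p.IsPath)
    (hnil : ¬ p.Nil) : (p.edges.filter (fun e => a ∈ e)).length = 1 := by
  cases p with
  | nil => simp at hnil
  | cons h q =>
    rw [SimpleGraph.Walk.cons_isPath_iff] at hp
    rw [SimpleGraph.Walk.edges_cons]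
    have h1 : q.edges.filter (fun e => a ∈ e) = [] := by
      rw [List.filter_eq_nil_iff]
      intro e he hae
      exact absurd (mem_support_of_edge he (by simpa using hae)) hp.2
    simp [h1]

lemma count_interior_path {G : SimpleGraph V} {a b : V} {p : G.Walk a b} (hp : p.IsPath)
    {u : V} (hu : u ∈ p.support) (hua : u ≠ a) (hub : u ≠ b) :
    (p.edges.filter (fun e => u ∈ e)).length = 2 := by
  induction p with
  | nil => simp at hu; exact absurd hu hua
  | @cons x c y h q ih =>
    rw [SimpleGraph.Walk.cons_isPath_iff] at hp
    have hu' : u ∈ q.support := by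
      rw [SimpleGraph.Walk.support_cons, List.mem_cons] at hu
      rcases hu with rfl | h'
      · exact absurd rfl hua
      · exact h'
    rw [SimpleGraph.Walk.edges_cons]
    by_cases huc : u = c
    · subst huc
      have hq : ¬ q.Nil := by
        intro hn
        cases q with
        | nil => exact hub rfl
        | cons _ _ => simp [SimpleGraph.Walk.Nil] at hn
      rw [List.filter_cons_of_pos (by simp)]
      rw [List.length_cons, count_start_path hp.1 hq]
    · rw [List.filter_cons_of_neg (by simp only [Sym2.mem_iff, decide_eq_true_eq]; push_neg; exact ⟨hua, huc⟩)]
      exact ih hp.1 hu' huc hub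

lemma count_cycle_start {G : SimpleGraph V} {v : V} {c : G.Walk v v} (hc : c.IsCycle) :
    (c.edges.filter (fun e => v ∈ e)).length = 2 := by
  have h3 := hc.three_le_length
  cases c with
  | nil => simp at h3
  | @cons _ x _ h q =>
    rw [SimpleGraph.Walk.cons_isCycle_iff] at hc
    have hq : ¬ q.Nil := by
      rw [SimpleGraph.Walk.nil_iff_length_eq]
      simp only [SimpleGraph.Walk.length_cons] at h3
      omega
    have hrev : ¬ q.reverse.Nil := by
      rwa [SimpleGraph.Walk.nil_iff_length_eq, SimpleGraph.Walk.length_reverse,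
        ← SimpleGraph.Walk.nil_iff_length_eq]
    have := count_start_path hc.1.reverse hrev
    rw [SimpleGraph.Walk.edges_reverse, List.filter_reverse, List.length_reverse] at this
    rw [SimpleGraph.Walk.edges_cons, List.filter_cons_of_pos (by simp)]
    rw [List.length_cons, this]

lemma count_cycle {G : SimpleGraph V} {v : V} {c : G.Walk v v} (hc : c.IsCycle)
    {u : V} (hu : u ∈ c.support) : (c.edges.filter (fun e => u ∈ e)).length = 2 := by
  have hrot := count_cycle_start (hc.rotate hu)
  rwa [((c.rotate_edges _ hu).perm.filter _).length_eq] at hrot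

section CycleFinset

variable {G : SimpleGraph V} {v : V} {c : G.Walk v v}

lemma mem_tail_support (hc : c.IsCycle) {u : V} : u ∈ c.support.tail ↔ u ∈ c.support := by
  constructor
  · exact fun h => List.mem_of_mem_tail h
  · intro h
    rw [SimpleGraph.Walk.support_eq_cons c, List.mem_cons] at h
    rcases h with rfl | h
    · rw [← SimpleGraph.Walk.support_tail_of_not_nil c hc.not_nil]
      exact c.tail.end_mem_support
    · exact h

lemma cycle_edges_nodup (hc : c.IsCycle) : c.edges.Nodup :=
  hc.isCircuit.isTrail.edges_nodup

lemma vertex_edges_card (hc : c.IsCycle) {u : V} (hu : u ∈ c.support) :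
    (c.edges.toFinset.filter (fun e => u ∈ e)).card = 2 := by
  have h1 : c.edges.toFinset.filter (fun e => u ∈ e)
      = (c.edges.filter (fun e => u ∈ e)).toFinset := by
    rw [List.toFinset_filter]
    simp
  rw [h1, List.toFinset_card_of_nodup ((cycle_edges_nodup hc).filter _)]
  exact count_cycle hc hu

lemma edge_endpoints_card (hc : c.IsCycle) {e : Sym2 V} (he : e ∈ c.edges) :
    (c.support.tail.toFinset.filter (fun u => u ∈ e)).card = 2 := by
  induction e with
  | _ x y =>
    have hG := c.edges_subset_edgeSet he
    have hxy : x ≠ y := by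
      intro h
      exact G.not_isDiag_of_mem_edgeSet hG (by simp [h])
    have hx : x ∈ c.support.tail := (mem_tail_support hc).mpr
      (c.fst_mem_support_of_mem_edges he)
    have hy : y ∈ c.support.tail := (mem_tail_support hc).mpr
      (c.snd_mem_support_of_mem_edges he)
    have hset : c.support.tail.toFinset.filter (fun u => u ∈ s(x,y)) = {x, y} := by
      ext u
      simp only [Finset.mem_filter, List.mem_toFinset, Sym2.mem_iff, Finset.mem_insert,
        Finset.mem_singleton]
      constructor
      · tauto
      · rintro (rfl | rfl) <;> simp_all
    rw [hset, Finset.card_pair hxy]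

lemma S_card (hc : c.IsCycle) : c.support.tail.toFinset.card = c.length := by
  rw [List.toFinset_card_of_nodup hc.support_nodup, List.length_tail,
    SimpleGraph.Walk.length_support]
  omega

lemma EC_card (hc : c.IsCycle) : c.edges.toFinset.card = c.length := by
  rw [List.toFinset_card_of_nodup (cycle_edges_nodup hc), SimpleGraph.Walk.length_edges]

lemma cycWt_toFinset (hc : c.IsCycle) (w0 : Sym2 V → ℤ) :
    cycWt w0 c = wt w0 c.edges.toFinset := by
  rw [cycWt, wt, List.sum_toFinset _ (cycle_edges_nodup hc)]

end CycleFinset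

lemma double_count {S : Finset V} {T : Finset (Sym2 V)}
    (h2 : ∀ e ∈ T, (S.filter (fun u => u ∈ e)).card = 2) :
    ∑ u ∈ S, (T.filter (fun e => u ∈ e)).card = 2 * T.card := by
  have h0 : ∀ u, (T.filter (fun e => u ∈ e)).card = ∑ e ∈ T, if u ∈ e then 1 else 0 :=
    fun u => Finset.card_filter _ _
  simp_rw [h0]
  rw [Finset.sum_comm]
  have h1 : ∀ e ∈ T, (∑ u ∈ S, if u ∈ e then 1 else 0) = 2 := by
    intro e he
    rw [← Finset.card_filter]
    exact h2 e he
  rw [Finset.sum_congr rfl h1, Finset.sum_const, smul_eq_mul, mul_comm]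

lemma matching_filter_card_le {G : SimpleGraph V} {M : Finset (Sym2 V)} (hM : IsPM G M)
    {T : Finset (Sym2 V)} (hT : T ⊆ M) (u : V) : (T.filter (fun e => u ∈ e)).card ≤ 1 := by
  apply Finset.card_le_one.mpr
  intro a ha b hb
  simp only [Finset.mem_filter] at ha hb
  obtain ⟨e, -, hu⟩ := hM.2 u
  rw [hu a ⟨hT ha.1, ha.2⟩, hu b ⟨hT hb.1, hb.2⟩]

lemma swap_pm {G : SimpleGraph V} {M : Finset (Sym2 V)} (hM : IsPM G M)
    {v : V} {c : G.Walk v v} (hc : c.IsCycle)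
    (halt : ∀ u ∈ c.support,
      ((c.edges.toFinset.filter (fun e => e ∈ M)).filter (fun e => u ∈ e)).card = 1) :
    IsPM G ((M \ c.edges.toFinset) ∪ c.edges.toFinset.filter (fun e => e ∉ M)) ∧
    (c.edges.toFinset.filter (fun e => e ∈ M)).card
      = (c.edges.toFinset.filter (fun e => e ∉ M)).card ∧
    ∀ w0 : Sym2 V → ℤ,
      wt w0 ((M \ c.edges.toFinset) ∪ c.edges.toFinset.filter (fun e => e ∉ M))
        = wt w0 M - wt w0 (c.edges.toFinset.filter (fun e => e ∈ M))
          + wt w0 (c.edges.toFinset.filter (fun e => e ∉ M)) := by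
  set EC := c.edges.toFinset with hEC
  set A := EC.filter (fun e => e ∈ M) with hA
  set B := EC.filter (fun e => e ∉ M) with hB
  have hAEC : A ⊆ EC := Finset.filter_subset _ _
  have hBEC : B ⊆ EC := Finset.filter_subset _ _
  have hAM : A ⊆ M := fun e he => (Finset.mem_filter.mp he).2
  -- each support vertex has exactly one B-edge
  have hB1 : ∀ u ∈ c.support, (B.filter (fun e => u ∈ e)).card = 1 := by
    intro u hu
    have h2 := vertex_edges_card hc hu
    have hsplit := Finset.card_filter_add_card_filter_not
      (s := EC.filter (fun e => u ∈ e)) (p := fun e => e ∈ M)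
    rw [Finset.filter_comm, ← hA] at hsplit
    rw [show (EC.filter (fun e => u ∈ e)).filter (fun e => ¬ e ∈ M)
        = B.filter (fun e => u ∈ e) from Finset.filter_comm _ _ _] at hsplit
    rw [h2, halt u hu] at hsplit
    omega
  -- the new matching
  have hpm : IsPM G ((M \ EC) ∪ B) := by
    constructor
    · intro e he
      rcases Finset.mem_union.mp he with h | h
      · exact hM.1 e (Finset.mem_sdiff.mp h).1
      · exact c.edges_subset_edgeSet (List.mem_toFinset.mp (hBEC h))
    · intro u
      by_cases hu : u ∈ c.support
      · obtain ⟨eb, heb⟩ := Finset.card_eq_one.mp (hB1 u hu)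
        have hebm : eb ∈ B ∧ u ∈ eb := by
          have : eb ∈ B.filter (fun e => u ∈ e) := by rw [heb]; exact Finset.mem_singleton_self _
          exact ⟨(Finset.mem_filter.mp this).1, (Finset.mem_filter.mp this).2⟩
        obtain ⟨ea, hea⟩ := Finset.card_eq_one.mp (halt u hu)
        have heam : ea ∈ A ∧ u ∈ ea := by
          have : ea ∈ A.filter (fun e => u ∈ e) := by rw [hea]; exact Finset.mem_singleton_self _
          exact ⟨(Finset.mem_filter.mp this).1, (Finset.mem_filter.mp this).2⟩
        refine ⟨eb, ⟨Finset.mem_union_right _ hebm.1, hebm.2⟩, ?_⟩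
        rintro f ⟨hf, huf⟩
        rcases Finset.mem_union.mp hf with h | h
        · exfalso
          obtain ⟨em, -, hemU⟩ := hM.2 u
          have h1 : f = em := hemU f ⟨(Finset.mem_sdiff.mp h).1, huf⟩
          have h2 : ea = em := hemU ea ⟨hAM heam.1, heam.2⟩
          exact (Finset.mem_sdiff.mp h).2 (h1 ▸ h2 ▸ hAEC heam.1)
        · have : f ∈ B.filter (fun e => u ∈ e) := Finset.mem_filter.mpr ⟨h, huf⟩
          rw [heb, Finset.mem_singleton] at this
          exact this
      · obtain ⟨em, ⟨hemM, hemu⟩, hemU⟩ := hM.2 u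
        have hemEC : em ∉ EC := fun h =>
          hu (mem_support_of_edge (List.mem_toFinset.mp h) hemu)
        refine ⟨em, ⟨Finset.mem_union_left _ (Finset.mem_sdiff.mpr ⟨hemM, hemEC⟩), hemu⟩, ?_⟩
        rintro f ⟨hf, huf⟩
        rcases Finset.mem_union.mp hf with h | h
        · exact hemU f ⟨(Finset.mem_sdiff.mp h).1, huf⟩
        · exact absurd (mem_support_of_edge (List.mem_toFinset.mp (hBEC h)) huf) hu
  refine ⟨hpm, ?_, ?_⟩
  · -- cardinalities
    have hdA : ∑ u ∈ c.support.tail.toFinset, (A.filter (fun e => u ∈ e)).card = 2 * A.card :=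
      double_count (fun e he => edge_endpoints_card hc (List.mem_toFinset.mp (hAEC he)))
    have hdB : ∑ u ∈ c.support.tail.toFinset, (B.filter (fun e => u ∈ e)).card = 2 * B.card :=
      double_count (fun e he => edge_endpoints_card hc (List.mem_toFinset.mp (hBEC he)))
    have hsup : ∀ u ∈ c.support.tail.toFinset, u ∈ c.support := fun u hu =>
      (mem_tail_support hc).mp (List.mem_toFinset.mp hu)
    have hA1 : ∑ u ∈ c.support.tail.toFinset, (A.filter (fun e => u ∈ e)).card
        = c.support.tail.toFinset.card := by
      rw [Finset.sum_congr rfl (fun u hu => halt u (hsup u hu)), Finset.sum_const, smul_eq_mul,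
        mul_one]
    have hB1' : ∑ u ∈ c.support.tail.toFinset, (B.filter (fun e => u ∈ e)).card
        = c.support.tail.toFinset.card := by
      rw [Finset.sum_congr rfl (fun u hu => hB1 u (hsup u hu)), Finset.sum_const, smul_eq_mul,
        mul_one]
    omega
  · -- weights
    intro w0
    have hdisj : Disjoint (M \ EC) B := by
      rw [Finset.disjoint_left]
      intro e he heB
      exact (Finset.mem_sdiff.mp he).2 (hBEC heB)
    have hMsdiff : M \ EC = M \ A := by
      ext e
      simp only [Finset.mem_sdiff, hA, Finset.mem_filter]
      tauto
    rw [wt, Finset.sum_union hdisj, hMsdiff, Finset.sum_sdiff_eq_sub hAM]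
    rw [wt, wt, wt]

lemma wt_nonneg (w : Sym2 V → ℕ) (X : Finset (Sym2 V)) : 0 ≤ wt (fun e => (w e : ℤ)) X :=
  Finset.sum_nonneg (fun e _ => Int.natCast_nonneg _)

lemma wt_mono (w : Sym2 V → ℕ) {X Y : Finset (Sym2 V)} (h : X ⊆ Y) :
    wt (fun e => (w e : ℤ)) X ≤ wt (fun e => (w e : ℤ)) Y :=
  Finset.sum_le_sum_of_subset_of_nonneg h (fun e _ _ => Int.natCast_nonneg _)

lemma wt_w'_split {M : Finset (Sym2 V)} {w : Sym2 V → ℕ} {k : ℤ} {w' : Sym2 V → ℤ}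
    (hw' : ∀ e : Sym2 V, w' e = if e ∈ M then -(w e : ℤ) - k - 1 else (w e : ℤ) + k + 1)
    (EC : Finset (Sym2 V)) :
    wt w' EC = (wt (fun e => (w e : ℤ)) (EC.filter (fun e => e ∉ M))
        - wt (fun e => (w e : ℤ)) (EC.filter (fun e => e ∈ M)))
      + (((EC.filter (fun e => e ∉ M)).card : ℤ)
        - ((EC.filter (fun e => e ∈ M)).card : ℤ)) * (k + 1) := by
  rw [wt, ← Finset.sum_filter_add_sum_filter_not EC (fun e => e ∈ M)]
  have h1 : ∑ e ∈ EC.filter (fun e => e ∈ M), w' e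
      = ∑ e ∈ EC.filter (fun e => e ∈ M), (-(w e : ℤ) - (k + 1)) :=
    Finset.sum_congr rfl (fun e he => by
      rw [hw', if_pos (Finset.mem_filter.mp he).2]; ring)
  have h2 : ∑ e ∈ EC.filter (fun e => ¬ e ∈ M), w' e
      = ∑ e ∈ EC.filter (fun e => ¬ e ∈ M), ((w e : ℤ) + (k + 1)) :=
    Finset.sum_congr rfl (fun e he => by
      rw [hw', if_neg (Finset.mem_filter.mp he).2]; ring)
  have e1 : ∑ e ∈ EC.filter (fun e => e ∈ M), (-(w e : ℤ) - (k + 1))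
      = -(∑ e ∈ EC.filter (fun e => e ∈ M), (w e : ℤ))
        - ((EC.filter (fun e => e ∈ M)).card : ℤ) * (k + 1) := by
    rw [Finset.sum_sub_distrib, Finset.sum_neg_distrib, Finset.sum_const, nsmul_eq_mul]
  have e2 : ∑ e ∈ EC.filter (fun e => ¬ e ∈ M), ((w e : ℤ) + (k + 1))
      = (∑ e ∈ EC.filter (fun e => ¬ e ∈ M), (w e : ℤ))
        + ((EC.filter (fun e => ¬ e ∈ M)).card : ℤ) * (k + 1) := by
    rw [Finset.sum_add_distrib, Finset.sum_const, nsmul_eq_mul]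
  rw [h1, h2, e1, e2, wt, wt]
  ring

lemma alt_of_cards {G : SimpleGraph V} {M : Finset (Sym2 V)} (hM : IsPM G M)
    {v : V} {c : G.Walk v v} (hc : c.IsCycle) :
    (c.edges.toFinset.filter (fun e => e ∈ M)).card
      ≤ (c.edges.toFinset.filter (fun e => e ∉ M)).card ∧
    ((c.edges.toFinset.filter (fun e => e ∈ M)).card
        = (c.edges.toFinset.filter (fun e => e ∉ M)).card →
      ∀ u ∈ c.support,
        ((c.edges.toFinset.filter (fun e => e ∈ M)).filter (fun e => u ∈ e)).card = 1) := by
  set EC := c.edges.toFinset with hEC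
  set A := EC.filter (fun e => e ∈ M) with hA
  set B := EC.filter (fun e => e ∉ M) with hB
  have hAEC : A ⊆ EC := Finset.filter_subset _ _
  have hAM : A ⊆ M := fun e he => (Finset.mem_filter.mp he).2
  have hcount : ∀ u : V, (A.filter (fun e => u ∈ e)).card ≤ 1 :=
    matching_filter_card_le hM hAM
  have hdA : ∑ u ∈ c.support.tail.toFinset, (A.filter (fun e => u ∈ e)).card = 2 * A.card :=
    double_count (fun e he => edge_endpoints_card hc (List.mem_toFinset.mp (hAEC he)))
  have hsum_le : ∑ u ∈ c.support.tail.toFinset, (A.filter (fun e => u ∈ e)).card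
      ≤ c.support.tail.toFinset.card := by
    calc ∑ u ∈ c.support.tail.toFinset, (A.filter (fun e => u ∈ e)).card
        ≤ ∑ _u ∈ c.support.tail.toFinset, 1 :=
          Finset.sum_le_sum (fun u _ => hcount u)
      _ = c.support.tail.toFinset.card := by simp
  have hsplit : A.card + B.card = EC.card :=
    Finset.card_filter_add_card_filter_not (s := EC) (p := fun e => e ∈ M)
  have hSE : c.support.tail.toFinset.card = EC.card := by rw [S_card hc, EC_card hc]
  constructor
  · omega
  · intro hcard u hu
    have huS : u ∈ c.support.tail.toFinset :=
      List.mem_toFinset.mpr ((mem_tail_support hc).mpr hu)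
    by_contra hne
    have hlt : (A.filter (fun e => u ∈ e)).card < 1 := lt_of_le_of_ne (hcount u) hne
    have : ∑ u ∈ c.support.tail.toFinset, (A.filter (fun e => u ∈ e)).card
        < c.support.tail.toFinset.card := by
      calc ∑ u ∈ c.support.tail.toFinset, (A.filter (fun e => u ∈ e)).card
          < ∑ _u ∈ c.support.tail.toFinset, 1 :=
            Finset.sum_lt_sum (fun u _ => hcount u) ⟨u, huS, hlt⟩
        _ = c.support.tail.toFinset.card := by simp
    omega

lemma backward_dir (G : SimpleGraph V) (w : Sym2 V → ℕ) (k : ℤ)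
    (M : Finset (Sym2 V)) (hM : IsPM G M)
    (hk : wt (fun e => (w e : ℤ)) M ≤ k)
    (hpar : ¬ wt (fun e => (w e : ℤ)) M ≡ k [ZMOD 2])
    (w' : Sym2 V → ℤ)
    (hw' : ∀ e : Sym2 V,
      w' e = if e ∈ M then -(w e : ℤ) - k - 1 else (w e : ℤ) + k + 1)
    {v : V} {c : G.Walk v v} (hc : c.IsCycle) (hodd : Odd (cycWt w' c))
    (hle : cycWt w' c ≤ k - wt (fun e => (w e : ℤ)) M) :
    ∃ Mstar : Finset (Sym2 V), IsPM G Mstar ∧ wt (fun e => (w e : ℤ)) Mstar ≤ k ∧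
      wt (fun e => (w e : ℤ)) Mstar ≡ k [ZMOD 2] := by
  set EC := c.edges.toFinset with hEC
  set A := EC.filter (fun e => e ∈ M) with hA
  set B := EC.filter (fun e => e ∉ M) with hB
  have hAM : A ⊆ M := fun e he => (Finset.mem_filter.mp he).2
  have hcyc : cycWt w' c = (wt (fun e => (w e : ℤ)) B - wt (fun e => (w e : ℤ)) A)
      + ((B.card : ℤ) - (A.card : ℤ)) * (k + 1) := by
    rw [cycWt_toFinset hc, wt_w'_split hw']
  have hWM0 : 0 ≤ wt (fun e => (w e : ℤ)) M := wt_nonneg w M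
  have hWA : wt (fun e => (w e : ℤ)) A ≤ wt (fun e => (w e : ℤ)) M := wt_mono w hAM
  have hWB : 0 ≤ wt (fun e => (w e : ℤ)) B := wt_nonneg w B
  obtain ⟨hcle, halt'⟩ := alt_of_cards hM hc
  have hcards : A.card = B.card := by
    by_contra hne
    have hlt : A.card < B.card := lt_of_le_of_ne hcle hne
    have hd : (1 : ℤ) ≤ (B.card : ℤ) - (A.card : ℤ) := by omega
    have hk1 : (0 : ℤ) ≤ k + 1 := by linarith
    have : (k + 1) ≤ ((B.card : ℤ) - (A.card : ℤ)) * (k + 1) :=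
      le_mul_of_one_le_left hk1 hd
    linarith
  have halt := halt' hcards
  obtain ⟨hpm, -, hwts⟩ := swap_pm hM hc halt
  have hcyc2 : cycWt w' c = wt (fun e => (w e : ℤ)) B - wt (fun e => (w e : ℤ)) A := by
    rw [hcyc, hcards]; ring
  have hwm := hwts (fun e => (w e : ℤ))
  rw [← hEC, ← hA, ← hB] at hwm
  have hkey : wt (fun e => (w e : ℤ)) ((M \ EC) ∪ B)
      = wt (fun e => (w e : ℤ)) M + cycWt w' c := by
    rw [hwm, hcyc2]; ring
  refine ⟨(M \ EC) ∪ B, hpm, ?_, ?_⟩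
  · linarith [hkey]
  · obtain ⟨m, hm⟩ := hodd
    simp only [Int.ModEq] at hpar ⊢
    omega

lemma exists_cycle_of_two_neighbors {H : SimpleGraph V}
    (hdeg : ∀ ⦃a z : V⦄, H.Adj a z → ∃ z', z' ≠ z ∧ H.Adj a z')
    {a₀ b₀ : V} (hab : H.Adj a₀ b₀) : ∃ (v : V) (c : H.Walk v v), c.IsCycle := by
  have key : ∀ (n : ℕ) (x y : V) (p : H.Walk x y), p.IsPath → ¬ p.Nil →
      Fintype.card V - p.length ≤ n → ∃ (v : V) (c : H.Walk v v), c.IsCycle := by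
    intro n
    induction n with
    | zero =>
      intro x y p hp hnil hlen
      have := hp.length_lt
      omega
    | succ m ih =>
      intro x y p hp hnil hlen
      cases p with
      | nil => simp at hnil
      | @cons _ c₀ _ hadj q =>
        obtain ⟨z, hzc, hz⟩ := hdeg hadj
        by_cases hmem : z ∈ (SimpleGraph.Walk.cons hadj q).support
        · -- found a cycle
          have hzx : z ≠ x := fun h => H.irrefl (h ▸ hz)
          refine ⟨z, SimpleGraph.Walk.cons hz.symm
            ((SimpleGraph.Walk.cons hadj q).takeUntil z hmem), ?_⟩
          rw [SimpleGraph.Walk.cons_isCycle_iff]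
          refine ⟨hp.takeUntil hmem, ?_⟩
          intro hin
          have hin' : s(z, x) ∈ (SimpleGraph.Walk.cons hadj q).edges :=
            SimpleGraph.Walk.edges_takeUntil_subset _ hmem hin
          have hfst : s(x, c₀) ∈ (SimpleGraph.Walk.cons hadj q).edges := by
            rw [SimpleGraph.Walk.edges_cons]; exact List.mem_cons_self
          have := path_start_edge_unique hp _ hin' _ hfst (by simp) (by simp)
          rw [Sym2.eq_iff] at this
          rcases this with ⟨h1, -⟩ | ⟨h1, -⟩
          · exact hzx h1
          · exact hzc h1
        · -- extend the path
          have hp' : (SimpleGraph.Walk.cons hz.symm (SimpleGraph.Walk.cons hadj q)).IsPath := by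
            rw [SimpleGraph.Walk.cons_isPath_iff]
            exact ⟨hp, hmem⟩
          refine ih z y _ hp' (by simp) ?_
          simp only [SimpleGraph.Walk.length_cons] at hlen ⊢
          have := hp'.length_lt
          simp only [SimpleGraph.Walk.length_cons] at this
          omega
  have hp0 : (SimpleGraph.Walk.cons hab SimpleGraph.Walk.nil).IsPath := by
    rw [SimpleGraph.Walk.cons_isPath_iff]
    exact ⟨SimpleGraph.Walk.IsPath.nil, by simp [hab.ne]⟩
  exact key (Fintype.card V) a₀ b₀ _ hp0 (by simp) (by omega)


lemma symmdiff_swap {α : Type*} [DecidableEq α] {M Ms EC : Finset α}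
    (hxor : ∀ e ∈ EC, (e ∈ Ms ↔ e ∉ M)) :
    (M \ ((Ms \ EC) ∪ EC.filter (fun e => e ∉ Ms)))
      ∪ (((Ms \ EC) ∪ EC.filter (fun e => e ∉ Ms)) \ M)
      = ((M \ Ms) ∪ (Ms \ M)) \ EC := by
  ext e
  by_cases hEC : e ∈ EC
  · have h1 := hxor e hEC
    simp only [Finset.mem_union, Finset.mem_sdiff, Finset.mem_filter]
    tauto
  · simp only [Finset.mem_union, Finset.mem_sdiff, Finset.mem_filter]
    tauto

lemma forward_dir (G : SimpleGraph V) (w : Sym2 V → ℕ) (k : ℤ)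
    (M : Finset (Sym2 V)) (hM : IsPM G M)
    (hmin : ∀ M' : Finset (Sym2 V), IsPM G M' →
      wt (fun e => (w e : ℤ)) M ≤ wt (fun e => (w e : ℤ)) M')
    (hpar : ¬ wt (fun e => (w e : ℤ)) M ≡ k [ZMOD 2])
    (w' : Sym2 V → ℤ)
    (hw' : ∀ e : Sym2 V,
      w' e = if e ∈ M then -(w e : ℤ) - k - 1 else (w e : ℤ) + k + 1) :
    ∀ (n : ℕ) (Ms : Finset (Sym2 V)), IsPM G Ms →
      ((M \ Ms) ∪ (Ms \ M)).card ≤ n →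
      wt (fun e => (w e : ℤ)) Ms ≤ k →
      wt (fun e => (w e : ℤ)) Ms ≡ k [ZMOD 2] →
      ∃ (v : V) (c : G.Walk v v), c.IsCycle ∧ Odd (cycWt w' c) ∧
        cycWt w' c ≤ k - wt (fun e => (w e : ℤ)) M := by
  intro n
  have hMeq : ∀ Ms : Finset (Sym2 V), (M \ Ms) ∪ (Ms \ M) = ∅ →
      wt (fun e => (w e : ℤ)) Ms ≡ k [ZMOD 2] → False := by
    intro Ms hD hparMs
    rw [Finset.union_eq_empty] at hD
    have : M = Ms := Finset.Subset.antisymm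
      (Finset.sdiff_eq_empty_iff_subset.mp hD.1) (Finset.sdiff_eq_empty_iff_subset.mp hD.2)
    exact hpar (this ▸ hparMs)
  induction n with
  | zero =>
    intro Ms hMs hcard hle hparMs
    exact absurd hparMs (fun h => hMeq Ms (Finset.card_eq_zero.mp (Nat.le_zero.mp hcard)) h)
  | succ m ih =>
    intro Ms hMs hcard hle hparMs
    set D : Finset (Sym2 V) := (M \ Ms) ∪ (Ms \ M) with hD
    by_cases hDe : D = ∅
    · exact absurd hparMs (fun h => hMeq Ms hDe h)
    -- the symmetric-difference graph H
    have hDG : ∀ e ∈ D, e ∈ G.edgeSet := by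
      intro e he
      rcases Finset.mem_union.mp he with h | h
      · exact hM.1 e (Finset.mem_sdiff.mp h).1
      · exact hMs.1 e (Finset.mem_sdiff.mp h).1
    set H : SimpleGraph V := SimpleGraph.fromEdgeSet (↑D) with hH
    have hHadj : ∀ {x y : V}, H.Adj x y ↔ s(x, y) ∈ D ∧ x ≠ y := by
      intro x y
      rw [hH, SimpleGraph.fromEdgeSet_adj, Finset.mem_coe]
    -- existence of an H-edge
    obtain ⟨e₀, he₀⟩ := Finset.nonempty_iff_ne_empty.mpr hDe
    have hHedge : ∃ a b : V, H.Adj a b := by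
      induction e₀ with
      | _ a b =>
        refine ⟨a, b, hHadj.mpr ⟨he₀, ?_⟩⟩
        intro h
        exact G.not_isDiag_of_mem_edgeSet (hDG _ he₀) (by simp [h])
    obtain ⟨a₀, b₀, hab⟩ := hHedge
    -- the degree-two property
    have hdeg : ∀ ⦃a z : V⦄, H.Adj a z → ∃ z', z' ≠ z ∧ H.Adj a z' := by
      intro a z haz
      obtain ⟨he, hne⟩ := hHadj.mp haz
      obtain ⟨em, ⟨hemM, hemu⟩, hemU⟩ := hM.2 a
      obtain ⟨es, ⟨hesM, hesu⟩, hesU⟩ := hMs.2 a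
      have haz' : a ∈ s(a, z) := by simp
      rcases Finset.mem_union.mp he with h | h
      · -- s(a,z) ∈ M \ Ms ; the other edge is es
        have h1 : s(a, z) = em := hemU _ ⟨(Finset.mem_sdiff.mp h).1, haz'⟩
        have hesnM : es ∉ M := by
          intro hc
          have : es = em := hemU _ ⟨hc, hesu⟩
          exact (Finset.mem_sdiff.mp h).2 (h1 ▸ this ▸ hesM)
        have hesD : es ∈ D := Finset.mem_union_right _ (Finset.mem_sdiff.mpr ⟨hesM, hesnM⟩)
        obtain ⟨z', hz'⟩ := Sym2.mem_iff_exists.mp hesu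
        have haz'' : a ≠ z' := by
          intro hc
          exact G.not_isDiag_of_mem_edgeSet (hDG _ hesD) (by simp [hz', hc])
        refine ⟨z', ?_, hHadj.mpr ⟨hz' ▸ hesD, haz''⟩⟩
        intro hc
        have : es = s(a, z) := by rw [hz', hc]
        exact hesnM (this ▸ (Finset.mem_sdiff.mp h).1)
      · -- s(a,z) ∈ Ms \ M ; the other edge is em
        have h1 : s(a, z) = es := hesU _ ⟨(Finset.mem_sdiff.mp h).1, haz'⟩
        have hemnMs : em ∉ Ms := by
          intro hc
          have : em = es := hesU _ ⟨hc, hemu⟩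
          exact (Finset.mem_sdiff.mp h).2 (h1 ▸ this ▸ hemM)
        have hemD : em ∈ D := Finset.mem_union_left _ (Finset.mem_sdiff.mpr ⟨hemM, hemnMs⟩)
        obtain ⟨z', hz'⟩ := Sym2.mem_iff_exists.mp hemu
        have haz'' : a ≠ z' := by
          intro hc
          exact G.not_isDiag_of_mem_edgeSet (hDG _ hemD) (by simp [hz', hc])
        refine ⟨z', ?_, hHadj.mpr ⟨hz' ▸ hemD, haz''⟩⟩
        intro hc
        have : em = s(a, z) := by rw [hz', hc]
        exact hemnMs (this ▸ (Finset.mem_sdiff.mp h).1)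
    obtain ⟨v₀, ch, hch⟩ := exists_cycle_of_two_neighbors hdeg hab
    have hchD : ∀ e ∈ ch.edges, e ∈ D := by
      intro e he
      have := ch.edges_subset_edgeSet he
      rw [hH, SimpleGraph.edgeSet_fromEdgeSet] at this
      exact Finset.mem_coe.mp this.1
    have hchG : ∀ e ∈ ch.edges, e ∈ G.edgeSet := fun e he => hDG e (hchD e he)
    set c : G.Walk v₀ v₀ := ch.transfer G hchG with hcdef
    have hc : c.IsCycle := hch.transfer hchG
    have hce : c.edges = ch.edges := ch.edges_transfer hchG
    have hcsupp : c.support = ch.support := ch.support_transfer hchG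
    have hecD : ∀ e ∈ c.edges, e ∈ D := by rw [hce]; exact hchD
    set EC : Finset (Sym2 V) := c.edges.toFinset with hECdef
    have hECD : EC ⊆ D := fun e he => hecD e (List.mem_toFinset.mp he)
    -- structure at each vertex of the cycle
    have hstruct : ∀ u ∈ c.support,
        ((EC.filter (fun e => e ∈ M)).filter (fun e => u ∈ e)).card = 1 ∧
        ((EC.filter (fun e => e ∈ Ms)).filter (fun e => u ∈ e)).card = 1 := by
      intro u hu
      obtain ⟨e₁, e₂, hne, hpair⟩ := Finset.card_eq_two.mp (vertex_edges_card hc hu)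
      have he₁ : e₁ ∈ EC.filter (fun e => u ∈ e) := by
        rw [hpair]; exact Finset.mem_insert_self _ _
      have he₂ : e₂ ∈ EC.filter (fun e => u ∈ e) := by
        rw [hpair]; exact Finset.mem_insert_of_mem (Finset.mem_singleton_self _)
      obtain ⟨em, ⟨hemM, hemu⟩, hemU⟩ := hM.2 u
      obtain ⟨es, ⟨hesM, hesu⟩, hesU⟩ := hMs.2 u
      have hclass : ∀ e, e ∈ EC → u ∈ e → e = em ∨ e = es := by
        intro e he heu
        rcases Finset.mem_union.mp (hECD he) with h | h
        · exact Or.inl (hemU _ ⟨(Finset.mem_sdiff.mp h).1, heu⟩)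
        · exact Or.inr (hesU _ ⟨(Finset.mem_sdiff.mp h).1, heu⟩)
      have hc₁ := hclass e₁ (Finset.mem_filter.mp he₁).1 (Finset.mem_filter.mp he₁).2
      have hc₂ := hclass e₂ (Finset.mem_filter.mp he₂).1 (Finset.mem_filter.mp he₂).2
      have hkey : em ∈ EC ∧ es ∈ EC ∧ em ≠ es := by
        rcases hc₁ with rfl | rfl <;> rcases hc₂ with rfl | rfl
        · exact absurd rfl hne
        · exact ⟨(Finset.mem_filter.mp he₁).1, (Finset.mem_filter.mp he₂).1, hne⟩
        · exact ⟨(Finset.mem_filter.mp he₂).1, (Finset.mem_filter.mp he₁).1, Ne.symm hne⟩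
        · exact absurd rfl hne
      obtain ⟨hemEC, hesEC, hmsne⟩ := hkey
      have hesnM : es ∉ M := fun hcon => hmsne (Eq.symm (hemU _ ⟨hcon, hesu⟩))
      have hemnMs : em ∉ Ms := fun hcon => hmsne (hesU _ ⟨hcon, hemu⟩)
      constructor
      · rw [Finset.card_eq_one]
        refine ⟨em, ?_⟩
        ext f
        simp only [Finset.mem_filter, Finset.mem_singleton]
        constructor
        · rintro ⟨⟨hfEC, hfM⟩, hfu⟩
          rcases hclass f hfEC hfu with rfl | rfl
          · rfl
          · exact absurd hfM hesnM
        · rintro rfl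
          exact ⟨⟨hemEC, hemM⟩, hemu⟩
      · rw [Finset.card_eq_one]
        refine ⟨es, ?_⟩
        ext f
        simp only [Finset.mem_filter, Finset.mem_singleton]
        constructor
        · rintro ⟨⟨hfEC, hfMs⟩, hfu⟩
          rcases hclass f hfEC hfu with rfl | rfl
          · exact absurd hfMs hemnMs
          · rfl
        · rintro rfl
          exact ⟨⟨hesEC, hesM⟩, hesu⟩
    have hxor : ∀ e ∈ EC, (e ∈ Ms ↔ e ∉ M) := by
      intro e he
      rcases Finset.mem_union.mp (hECD he) with h | h
      · have := Finset.mem_sdiff.mp h; tauto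
      · have := Finset.mem_sdiff.mp h; tauto
    have hfMs : EC.filter (fun e => e ∈ Ms) = EC.filter (fun e => e ∉ M) :=
      Finset.filter_congr (fun e he => by rw [hxor e he])
    have hfM : EC.filter (fun e => e ∈ M) = EC.filter (fun e => e ∉ Ms) :=
      Finset.filter_congr (fun e he => by
        have := hxor e he; tauto)
    obtain ⟨hpm1, hcards1, hwts1⟩ := swap_pm hM hc (fun u hu => (hstruct u hu).1)
    obtain ⟨hpm2, hcards2, hwts2⟩ := swap_pm hMs hc (fun u hu => (hstruct u hu).2)
    rw [← hECdef] at hpm1 hcards1 hwts1 hpm2 hcards2 hwts2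
    have hcyc : cycWt w' c
        = wt (fun e => (w e : ℤ)) (EC.filter (fun e => e ∉ M))
          - wt (fun e => (w e : ℤ)) (EC.filter (fun e => e ∈ M)) := by
      rw [cycWt_toFinset hc, ← hECdef, wt_w'_split hw' EC, hcards1]
      ring
    have hw1 := hwts1 (fun e => (w e : ℤ))
    have hw2 := hwts2 (fun e => (w e : ℤ))
    rw [hfMs, ← hfM] at hw2
    have ht0 : 0 ≤ cycWt w' c := by
      have h := hmin _ hpm1
      rw [hw1] at h
      rw [hcyc]
      linarith
    have htle : cycWt w' c ≤ wt (fun e => (w e : ℤ)) Ms - wt (fun e => (w e : ℤ)) M := by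
      have h := hmin _ hpm2
      rw [← hfM] at h
      rw [hw2] at h
      rw [hcyc]
      linarith
    by_cases hodd : Odd (cycWt w' c)
    · refine ⟨v₀, c, hc, hodd, ?_⟩
      linarith
    · -- recurse with the swapped matching
      have hDnew : (M \ ((Ms \ EC) ∪ EC.filter (fun e => e ∉ Ms)))
          ∪ (((Ms \ EC) ∪ EC.filter (fun e => e ∉ Ms)) \ M) = D \ EC :=
        symmdiff_swap hxor
      have hcard' : ((M \ ((Ms \ EC) ∪ EC.filter (fun e => e ∉ Ms)))
          ∪ (((Ms \ EC) ∪ EC.filter (fun e => e ∉ Ms)) \ M)).card ≤ m := by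
        rw [hDnew, Finset.card_sdiff_of_subset hECD]
        have h3 := hc.three_le_length
        have hECc : EC.card = c.length := EC_card hc
        have hDm : D.card ≤ m + 1 := hcard
        have hDEC : EC.card ≤ D.card := Finset.card_le_card hECD
        omega
      have hwMs' : wt (fun e => (w e : ℤ)) ((Ms \ EC) ∪ EC.filter (fun e => e ∉ Ms))
          = wt (fun e => (w e : ℤ)) Ms - cycWt w' c := by
        rw [← hfM, hw2, hcyc]
        ring
      have hle' : wt (fun e => (w e : ℤ)) ((Ms \ EC) ∪ EC.filter (fun e => e ∉ Ms)) ≤ k := by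
        rw [hwMs']
        linarith
      have hpar' : wt (fun e => (w e : ℤ)) ((Ms \ EC) ∪ EC.filter (fun e => e ∉ Ms))
          ≡ k [ZMOD 2] := by
        obtain ⟨m', hm'⟩ := Int.not_odd_iff_even.mp hodd
        rw [hwMs']
        simp only [Int.ModEq] at hparMs ⊢
        omega
      exact ih _ hpm2 hcard' hle' hpar'

/-- **Correctness of the reduction BCPM ≤ SOC.** Let `M` be a minimum-weight perfect
matching of `G` (non-negative weights `w : E → ℕ`) with `w(M) ≤ k` and `w(M) ≢ k (mod 2)`,
and define `w'(e) = -w(e) - k - 1` for `e ∈ M` and `w'(e) = w(e) + k + 1` for `e ∉ M`.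
Then `G` has a perfect matching `M*` with `w(M*) ≤ k` and `w(M*) ≡ k (mod 2)` if and only
if `G` contains a cycle `C` with `w'(C)` odd and `w'(C) ≤ k - w(M)`. -/
theorem bcpm_iff_short_odd_cycle (G : SimpleGraph V) (w : Sym2 V → ℕ) (k : ℤ)
    (M : Finset (Sym2 V)) (hM : IsPM G M)
    (hmin : ∀ M' : Finset (Sym2 V), IsPM G M' →
      wt (fun e => (w e : ℤ)) M ≤ wt (fun e => (w e : ℤ)) M')
    (hk : wt (fun e => (w e : ℤ)) M ≤ k)
    (hpar : ¬ wt (fun e => (w e : ℤ)) M ≡ k [ZMOD 2])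
    (w' : Sym2 V → ℤ)
    (hw' : ∀ e : Sym2 V,
      w' e = if e ∈ M then -(w e : ℤ) - k - 1 else (w e : ℤ) + k + 1) :
    (∃ Mstar : Finset (Sym2 V), IsPM G Mstar ∧ wt (fun e => (w e : ℤ)) Mstar ≤ k ∧
        wt (fun e => (w e : ℤ)) Mstar ≡ k [ZMOD 2]) ↔
      (∃ (v : V) (c : G.Walk v v), c.IsCycle ∧ Odd (cycWt w' c) ∧
        cycWt w' c ≤ k - wt (fun e => (w e : ℤ)) M) := by
  constructor
  · rintro ⟨Ms, hMs, hle, hparMs⟩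
    exact forward_dir G w k M hM hmin hpar w' hw' ((M \ Ms) ∪ (Ms \ M)).card Ms hMs le_rfl
      hle hparMs
  · rintro ⟨v, c, hc, hodd, hle'⟩
    exact backward_dir G w k M hM hk hpar w' hw' hc hodd hle'
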